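/- arXiv:2302.05902 — 2 statements merged into one kernel-verified Lean document; each statement's English description precedes it below -/
import Mathlib

section
/- Let N ≥ 5, ω = exp(2πi/N), and define ξ_{ij} ∈ ℂ^N as above. Suppose i ≠ k, j ≠ l, and (k−i)+(j−l) ≡ 0 (mod N). Then ⟨ξ_{ij}, ξ_{kl}⟩ = 1 + (2Re(ω^{k−i}) − 2)/N, and hence 1 − 4/N ≤ ⟨ξ_{ij}, ξ_{kl}⟩ < 1; in particular ⟨ξ_{ij}, ξ_{kl}⟩ is real and nonzero. -/
open Complex

/-- `ω = exp(2πi/N)`. -/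
noncomputable def omegaN (N : ℕ) : ℂ := Complex.exp (2 * Real.pi * Complex.I / N)

/-- The vector `ξ_{ij} ∈ ℂ^N`: coordinate `p` (for `p = 1, …, N`, encoded as `p : Fin N`
with value `p+1`) is `ω^{1-j}/√N` if `p = 1`, `ω^{i-1}/√N` if `p = N`,
and `ω^{p(i-j)}/√N` otherwise. -/
noncomputable def xiVec (N : ℕ) (i j : ℤ) : EuclideanSpace ℂ (Fin N) :=
  WithLp.toLp 2 fun (p : Fin N) =>
    if (p : ℕ) = 0 then omegaN N ^ (1 - j) / (Real.sqrt N : ℂ)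
    else if (p : ℕ) = N - 1 then omegaN N ^ (i - 1) / (Real.sqrt N : ℂ)
    else omegaN N ^ ((((p : ℕ) : ℤ) + 1) * (i - j)) / (Real.sqrt N : ℂ)

lemma omegaN_ne_zero (N : ℕ) : omegaN N ≠ 0 := Complex.exp_ne_zero _

lemma omegaN_conj (N : ℕ) (m : ℤ) :
    (starRingEnd ℂ) (omegaN N ^ m) = omegaN N ^ (-m) := by
  have h : (starRingEnd ℂ) (omegaN N) = (omegaN N)⁻¹ := by
    rw [omegaN, ← Complex.exp_conj, ← Complex.exp_neg]
    congr 1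
    simp only [map_div₀, map_mul, map_ofNat, Complex.conj_ofReal, Complex.conj_I, map_natCast]
    ring
  rw [map_zpow₀, h, inv_zpow, ← zpow_neg]

lemma omegaN_zpow_eq_one (N : ℕ) (hN : N ≠ 0) (m : ℤ) (h : (N : ℤ) ∣ m) :
    omegaN N ^ m = 1 :=
  ((Complex.isPrimitiveRoot_exp N hN).zpow_eq_one_iff_dvd m).mpr h

theorem xiVec_inner_case_one (N : ℕ) (hN : 5 ≤ N) (i j k l : ℤ)
    (hi1 : 1 ≤ i) (hiN : i ≤ N) (hj1 : 1 ≤ j) (hjN : j ≤ N)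
    (hk1 : 1 ≤ k) (hkN : k ≤ N) (hl1 : 1 ≤ l) (hlN : l ≤ N)
    (hik : i ≠ k) (hjl : j ≠ l) (hmod : (N : ℤ) ∣ (k - i) + (j - l)) :
    (inner ℂ (xiVec N i j) (xiVec N k l) : ℂ) =
        1 + (((2 * (omegaN N ^ (k - i)).re - 2) / N : ℝ) : ℂ)
    ∧ 1 - 4 / (N : ℝ) ≤ (inner ℂ (xiVec N i j) (xiVec N k l) : ℂ).re
    ∧ (inner ℂ (xiVec N i j) (xiVec N k l) : ℂ).re < 1
    ∧ (inner ℂ (xiVec N i j) (xiVec N k l) : ℂ).im = 0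
    ∧ (inner ℂ (xiVec N i j) (xiVec N k l) : ℂ) ≠ 0 := by
  have hNpos : 0 < N := by omega
  have hN0 : N ≠ 0 := by omega
  have hNC : (N : ℂ) ≠ 0 := Nat.cast_ne_zero.mpr hN0
  have hNR : (0 : ℝ) < N := by exact_mod_cast hNpos
  set ω := omegaN N with hωdef
  have hωne : ω ≠ 0 := omegaN_ne_zero N
  have hconj : ∀ m : ℤ, (starRingEnd ℂ) (ω ^ m) = ω ^ (-m) := omegaN_conj N
  have hdvd1 : ∀ m : ℤ, (N : ℤ) ∣ m → ω ^ m = 1 := omegaN_zpow_eq_one N hN0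
  have hsq : (Real.sqrt N : ℂ) * (Real.sqrt N : ℂ) = (N : ℂ) := by
    rw [← Complex.ofReal_mul, Real.mul_self_sqrt (Nat.cast_nonneg N)]
    norm_num
  set p0 : Fin N := ⟨0, hNpos⟩ with hp0def
  set p1 : Fin N := ⟨N - 1, by omega⟩ with hp1def
  have hterm : ∀ p : Fin N, (starRingEnd ℂ) (xiVec N i j p) * xiVec N k l p
      = 1 / N + (if p = p0 then (ω ^ (j - l) - 1) / N else 0)
          + (if p = p1 then (ω ^ (k - i) - 1) / N else 0) := by
    intro p
    rcases eq_or_ne (p : ℕ) 0 with h0 | h0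
    · have hne1 : (p : ℕ) ≠ N - 1 := by omega
      have hpp0 : p = p0 := by rw [hp0def]; exact Fin.ext h0
      have hpp1 : p ≠ p1 := by rw [hp1def]; intro hc; rw [Fin.ext_iff] at hc; exact hne1 hc
      rw [if_pos hpp0, if_neg hpp1]
      simp only [xiVec, PiLp.toLp_apply, h0, hne1, if_true, if_false, ← hωdef]
      rw [map_div₀, hconj, Complex.conj_ofReal, div_mul_div_comm, hsq]
      rw [← zpow_add₀ hωne]
      have : -(1 - j) + (1 - l) = j - l := by ring
      rw [this]
      ring
    · rcases eq_or_ne (p : ℕ) (N - 1) with h1 | h1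
      · have hpp0 : p ≠ p0 := by rw [hp0def]; intro hc; rw [Fin.ext_iff] at hc; exact h0 hc
        have hpp1 : p = p1 := by rw [hp1def]; exact Fin.ext h1
        rw [if_neg hpp0, if_pos hpp1]
        have hN1 : N - 1 ≠ 0 := by omega
        simp only [xiVec, PiLp.toLp_apply, h0, h1, hN1, eq_self_iff_true, if_true, if_false, ite_true, ite_false,
          ← hωdef]
        rw [map_div₀, hconj, Complex.conj_ofReal, div_mul_div_comm, hsq]
        rw [← zpow_add₀ hωne]
        have : -(i - 1) + (k - 1) = k - i := by ring
        rw [this]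
        ring
      · have hpp0 : p ≠ p0 := by rw [hp0def]; intro hc; rw [Fin.ext_iff] at hc; exact h0 hc
        have hpp1 : p ≠ p1 := by rw [hp1def]; intro hc; rw [Fin.ext_iff] at hc; exact h1 hc
        rw [if_neg hpp0, if_neg hpp1]
        simp only [xiVec, PiLp.toLp_apply, h0, h1, if_false, ← hωdef]
        rw [map_div₀, hconj, Complex.conj_ofReal, div_mul_div_comm, hsq]
        rw [← zpow_add₀ hωne]
        have he : -((((p : ℕ) : ℤ) + 1) * (i - j)) + (((p : ℕ) : ℤ) + 1) * (k - l)
            = (((p : ℕ) : ℤ) + 1) * ((k - i) + (j - l)) := by ring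
        rw [he, hdvd1 _ (Dvd.dvd.mul_left hmod _)]
        simp [h0, h1]
  have hinner : (inner ℂ (xiVec N i j) (xiVec N k l) : ℂ)
      = 1 + (ω ^ (j - l) + ω ^ (k - i) - 2) / N := by
    rw [PiLp.inner_apply]
    simp only [RCLike.inner_apply]
    rw [Finset.sum_congr rfl (fun p _ => (mul_comm _ _).trans (hterm p))]
    rw [Finset.sum_add_distrib, Finset.sum_add_distrib,
      Finset.sum_ite_eq' Finset.univ p0 (fun _ => (ω ^ (j - l) - 1) / (N : ℂ)),
      Finset.sum_ite_eq' Finset.univ p1 (fun _ => (ω ^ (k - i) - 1) / (N : ℂ)),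
      Finset.sum_const, Finset.card_univ, Fintype.card_fin]
    simp only [Finset.mem_univ, if_true, nsmul_eq_mul]
    field_simp
    ring
  set z := ω ^ (k - i) with hzdef
  have hjlz : ω ^ (j - l) = (starRingEnd ℂ) z := by
    rw [hzdef, hconj]
    have : (j - l) = -(k - i) + ((k - i) + (j - l)) := by ring
    rw [this, zpow_add₀ hωne, hdvd1 _ hmod, mul_one]
  have hzz : z.re * z.re + z.im * z.im = 1 := by
    have h1 : z * (starRingEnd ℂ) z = 1 := by
      rw [hzdef, hconj, ← zpow_add₀ hωne, add_neg_cancel, zpow_zero]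
    rw [Complex.mul_conj] at h1
    have h2 : Complex.normSq z = 1 := by exact_mod_cast h1
    rw [Complex.normSq_apply] at h2
    exact h2
  have hzne1 : z ≠ 1 := by
    intro hz
    have hdvd : (N : ℤ) ∣ (k - i) :=
      ((Complex.isPrimitiveRoot_exp N hN0).zpow_eq_one_iff_dvd (k - i)).mp hz
    have hki : k - i ≠ 0 := sub_ne_zero.mpr (Ne.symm hik)
    have habs : (N : ℤ) ≤ |k - i| :=
      Int.le_of_dvd (abs_pos.mpr hki) ((dvd_abs _ _).mpr hdvd)
    rcases abs_cases (k - i) with ⟨h1, _⟩ | ⟨h1, _⟩ <;> omega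
  set c := z.re with hcdef
  have hcle : c ≤ 1 := by nlinarith [sq_nonneg z.im]
  have hcge : -1 ≤ c := by nlinarith [sq_nonneg z.im]
  have hclt : c < 1 := by
    rcases lt_or_eq_of_le hcle with h | h
    · exact h
    · exfalso
      apply hzne1
      have him : z.im = 0 := by nlinarith
      apply Complex.ext
      · rw [← hcdef, h]; rfl
      · rw [him]; rfl
  have hadd : ω ^ (j - l) + z = ((2 * c : ℝ) : ℂ) := by
    rw [hjlz, add_comm, hcdef, Complex.add_conj]
  have hinner2 : (inner ℂ (xiVec N i j) (xiVec N k l) : ℂ)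
      = 1 + (((2 * c - 2) / N : ℝ) : ℂ) := by
    rw [hinner, hadd]
    push_cast
    ring
  have hre : (inner ℂ (xiVec N i j) (xiVec N k l) : ℂ).re = 1 + (2 * c - 2) / N := by
    rw [hinner2]
    simp
  have him : (inner ℂ (xiVec N i j) (xiVec N k l) : ℂ).im = 0 := by
    rw [hinner2]
    simp
  refine ⟨hinner2, ?_, ?_, him, ?_⟩
  · rw [hre]
    have h1 : (0 : ℝ) ≤ (2 * c + 2) / N := div_nonneg (by linarith) hNR.le
    have h2 : (2 * c - 2) / N = (2 * c + 2) / N + (-4) / N := by ring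
    have h3 : (-4 : ℝ) / N = -(4 / (N : ℝ)) := by ring
    linarith
  · rw [hre]
    have h1 : (2 * c - 2) / N < 0 := div_neg_of_neg_of_pos (by linarith) hNR
    linarith
  · intro h
    have h2 : (inner ℂ (xiVec N i j) (xiVec N k l) : ℂ).re = 0 := by rw [h]; rfl
    rw [hre] at h2
    have h1 : (0 : ℝ) ≤ (2 * c + 2) / N := div_nonneg (by linarith) hNR.le
    have h2' : (2 * c - 2) / N = (2 * c + 2) / N + (-4) / N := by ring
    have h4 : (4 : ℝ) / N ≤ 4 / 5 := by
      apply div_le_div_of_nonneg_left (by norm_num) (by norm_num)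
      exact_mod_cast hN
    have h5 : (-4 : ℝ) / N = -(4 / (N : ℝ)) := by ring
    linarith
end

section
/- Let N ≥ 5, ω = exp(2πi/N), and define ξ_{ij} ∈ ℂ^N as above. Suppose i ≠ k, j ≠ l, and (k−i)+(j−l) ≢ 0 (mod N). Then ⟨ξ_{ij}, ξ_{kl}⟩ = (1/N)(ω^{j−l} − 1)(1 − ω^{k−i}), and 0 < |⟨ξ_{ij}, ξ_{kl}⟩| ≤ 4/N < 1. -/
open Complex

theorem xiVec_inner_case_two (N : ℕ) (hN : 5 ≤ N) (i j k l : ℤ)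
    (hi1 : 1 ≤ i) (hiN : i ≤ N) (hj1 : 1 ≤ j) (hjN : j ≤ N)
    (hk1 : 1 ≤ k) (hkN : k ≤ N) (hl1 : 1 ≤ l) (hlN : l ≤ N)
    (hik : i ≠ k) (hjl : j ≠ l) (hmod : ¬ (N : ℤ) ∣ (k - i) + (j - l)) :
    (inner ℂ (xiVec N i j) (xiVec N k l) : ℂ) =
        (1 / N) * (omegaN N ^ (j - l) - 1) * (1 - omegaN N ^ (k - i))
    ∧ 0 < ‖(inner ℂ (xiVec N i j) (xiVec N k l) : ℂ)‖
    ∧ ‖(inner ℂ (xiVec N i j) (xiVec N k l) : ℂ)‖ ≤ 4 / (N : ℝ)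
    ∧ 4 / (N : ℝ) < 1 := by
  have hN0 : N ≠ 0 := by omega
  have hNC : (N : ℂ) ≠ 0 := Nat.cast_ne_zero.mpr hN0
  set ω := omegaN N with hωdef
  have hprim : IsPrimitiveRoot ω N := Complex.isPrimitiveRoot_exp N hN0
  have hωpow : ω ^ N = 1 := hprim.pow_eq_one
  have hωN : ω ^ (N : ℤ) = 1 := by rw [zpow_natCast]; exact hωpow
  have hω0 : ω ≠ 0 := hprim.ne_zero hN0
  have habs : ‖ω‖ = 1 := Complex.norm_eq_one_of_pow_eq_one hωpow hN0
  have hconj : ∀ z : ℤ, (starRingEnd ℂ) (ω ^ z) = ω ^ (-z) := by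
    intro z
    rw [map_zpow₀, ← Complex.inv_eq_conj habs, inv_zpow, ← zpow_neg]
  have hnormz : ∀ z : ℤ, ‖ω ^ z‖ = 1 := by
    intro z; rw [norm_zpow, habs, one_zpow]
  have hs : (Real.sqrt N : ℂ) * (Real.sqrt N : ℂ) = (N : ℂ) := by
    rw [← Complex.ofReal_mul, Real.mul_self_sqrt (Nat.cast_nonneg N)]
    push_cast; ring
  have hconjs : (starRingEnd ℂ) ((Real.sqrt N : ℝ) : ℂ) = ((Real.sqrt N : ℝ) : ℂ) :=
    Complex.conj_ofReal _
  set d : ℤ := (k - i) + (j - l) with hd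
  set F : ℕ → ℂ := fun m =>
    (if m = 0 then ω ^ (j - l) else if m = N - 1 then ω ^ (k - i)
      else ω ^ (((m : ℤ) + 1) * d)) / (N : ℂ) with hF
  -- termwise computation
  have hterm : ∀ p : Fin N, (starRingEnd ℂ) (xiVec N i j p) * xiVec N k l p = F (p : ℕ) := by
    intro p
    simp only [xiVec, hF, ← hωdef]
    split_ifs with h1 h2
    · rw [map_div₀, hconjs, hconj, div_mul_div_comm, ← zpow_add₀ hω0, hs,
        show -(1 - j) + (1 - l) = j - l by ring]
    · rw [map_div₀, hconjs, hconj, div_mul_div_comm, ← zpow_add₀ hω0, hs,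
        show -(i - 1) + (k - 1) = k - i by ring]
    · rw [map_div₀, hconjs, hconj, div_mul_div_comm, ← zpow_add₀ hω0, hs,
        show -((((p : ℕ) : ℤ) + 1) * (i - j)) + (((p : ℕ) : ℤ) + 1) * (k - l)
          = (((p : ℕ) : ℤ) + 1) * d by rw [hd]; ring]
  have hinner : (inner ℂ (xiVec N i j) (xiVec N k l) : ℂ) = ∑ m ∈ Finset.range N, F m := by
    rw [PiLp.inner_apply]
    simp only [RCLike.inner_apply]
    rw [Finset.sum_congr rfl fun p _ => (mul_comm _ _).trans (hterm p)]
    exact Fin.sum_univ_eq_sum_range F N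
  -- geometric series
  have hx : ω ^ d ≠ 1 := fun h => hmod ((hprim.zpow_eq_one_iff_dvd d).1 h)
  have hxN : (ω ^ d) ^ N = 1 := by
    rw [← zpow_natCast, ← zpow_mul, mul_comm, zpow_mul, hωN, one_zpow]
  have hgeo : ∑ m ∈ Finset.range N, (ω ^ d) ^ m = 0 := by
    rw [geom_sum_eq hx, hxN]; simp
  have hmid : ∑ m ∈ Finset.range (N - 2), (ω ^ d) ^ (m + 2) = -1 - ω ^ d := by
    have h1 : N = N - 2 + 1 + 1 := by omega
    rw [h1, Finset.sum_range_succ', Finset.sum_range_succ'] at hgeo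
    linear_combination hgeo
  -- evaluate the sum
  have hsum : ∑ m ∈ Finset.range N, F m
      = (ω ^ (j - l) + (-1 - ω ^ d) + ω ^ (k - i)) / (N : ℂ) := by
    conv_lhs => rw [show N = N - 2 + 1 + 1 from by omega]
    rw [Finset.sum_range_succ, Finset.sum_range_succ']
    have hF0 : F 0 = ω ^ (j - l) / (N : ℂ) := by
      simp [hF]
    have hFN : F (N - 2 + 1) = ω ^ (k - i) / (N : ℂ) := by
      simp only [hF]
      rw [if_neg (by omega), if_pos (show N - 2 + 1 = N - 1 by omega)]
    have hFm : ∀ m ∈ Finset.range (N - 2), F (m + 1) = (ω ^ d) ^ (m + 2) / (N : ℂ) := by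
      intro m hm
      simp only [Finset.mem_range] at hm
      simp only [hF]
      rw [if_neg (by omega), if_neg (by omega), ← zpow_natCast (ω ^ d), ← zpow_mul]
      congr 1
      push_cast
      ring_nf
    rw [Finset.sum_congr rfl hFm, hF0, hFN, ← Finset.sum_div, hmid]
    ring_nf
  have hdmul : ω ^ d = ω ^ (j - l) * ω ^ (k - i) := by
    rw [hd, show k - i + (j - l) = (j - l) + (k - i) by ring, zpow_add₀ hω0]
  have hval : (inner ℂ (xiVec N i j) (xiVec N k l) : ℂ)
      = (1 / N) * (ω ^ (j - l) - 1) * (1 - ω ^ (k - i)) := by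
    rw [hinner, hsum, hdmul]
    field_simp
    ring_nf
  refine ⟨hval, ?_, ?_, ?_⟩
  · rw [hval]
    have hjl' : ω ^ (j - l) - 1 ≠ 0 := by
      rw [sub_ne_zero]
      intro h
      have hdvd := (hprim.zpow_eq_one_iff_dvd _).1 h
      have : j - l = 0 := Int.eq_zero_of_abs_lt_dvd hdvd (abs_lt.mpr ⟨by omega, by omega⟩)
      omega
    have hik' : 1 - ω ^ (k - i) ≠ 0 := by
      rw [sub_ne_zero]
      intro h
      have hdvd := (hprim.zpow_eq_one_iff_dvd _).1 h.symm
      have : k - i = 0 := Int.eq_zero_of_abs_lt_dvd hdvd (abs_lt.mpr ⟨by omega, by omega⟩)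
      omega
    have : (1 / (N : ℂ)) * (ω ^ (j - l) - 1) * (1 - ω ^ (k - i)) ≠ 0 := by
      exact mul_ne_zero (mul_ne_zero (by simpa using hNC) hjl') hik'
    exact norm_pos_iff.mpr this
  · rw [hval, norm_mul, norm_mul]
    have h1 : ‖(1 / (N : ℂ))‖ = 1 / (N : ℝ) := by
      rw [norm_div, norm_one, Complex.norm_natCast]
    have h2 : ‖ω ^ (j - l) - 1‖ ≤ 2 := by
      calc ‖ω ^ (j - l) - 1‖ ≤ ‖ω ^ (j - l)‖ + ‖(1 : ℂ)‖ := norm_sub_le _ _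
        _ = 2 := by rw [hnormz, norm_one]; norm_num
    have h3 : ‖1 - ω ^ (k - i)‖ ≤ 2 := by
      calc ‖1 - ω ^ (k - i)‖ ≤ ‖(1 : ℂ)‖ + ‖ω ^ (k - i)‖ := norm_sub_le _ _
        _ = 2 := by rw [hnormz, norm_one]; norm_num
    rw [h1, show (4 : ℝ) / N = 1 / N * 2 * 2 by ring]
    have hN' : (0 : ℝ) < 1 / N := by positivity
    calc 1 / (N : ℝ) * ‖ω ^ (j - l) - 1‖ * ‖1 - ω ^ (k - i)‖
        ≤ 1 / (N : ℝ) * 2 * ‖1 - ω ^ (k - i)‖ := by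
          have := mul_le_mul_of_nonneg_left h2 hN'.le
          exact mul_le_mul_of_nonneg_right this (norm_nonneg _)
      _ ≤ 1 / (N : ℝ) * 2 * 2 := by
          have : (0 : ℝ) ≤ 1 / (N : ℝ) * 2 := by positivity
          exact mul_le_mul_of_nonneg_left h3 this
  · rw [div_lt_one (by positivity)]
    exact_mod_cast by omega
end
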